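/- Let X ⊆ ℝ (with the subspace topology). Then X satisfies Ufin(O,Γ) (the Hurewicz property) if, and only if, every continuous image of X in the Baire space ℕ^ℕ is bounded with respect to ≤*. -/

import Mathlib

open Filter Set

/-- `f ≤* g`: `f n ≤ g n` for all but finitely many `n`. -/
def LeStar (f g : ℕ → ℕ) : Prop := ∀ᶠ n in Filter.atTop, f n ≤ g n

/-- A subset of Baire space is bounded if it has a `≤*`-upper bound. -/
def BddFam (B : Set (ℕ → ℕ)) : Prop := ∃ g : ℕ → ℕ, ∀ f ∈ B, LeStar f g

/-- A subset of Baire space is dominating if every function is `≤*` below some member. -/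
def DominatingFam (D : Set (ℕ → ℕ)) : Prop := ∀ g : ℕ → ℕ, ∃ f ∈ D, LeStar g f

/-- An open cover of a topological space. -/
def IsOpenCover {X : Type*} [TopologicalSpace X] (𝒰 : Set (Set X)) : Prop :=
  (∀ U ∈ 𝒰, IsOpen U) ∧ ⋃₀ 𝒰 = Set.univ

/-- The cover `𝒰` contains a finite subcover. -/
def HasFinSubcover {X : Type*} (𝒰 : Set (Set X)) : Prop :=
  ∃ ℱ ⊆ 𝒰, ℱ.Finite ∧ ⋃₀ ℱ = Set.univ

/-- The Hurewicz property `Ufin(O,Γ)`. -/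
def UfinOGamma (X : Type*) [TopologicalSpace X] : Prop :=
  ∀ 𝒰 : ℕ → Set (Set X),
    (∀ n, IsOpenCover (𝒰 n)) → (∀ n, ¬ HasFinSubcover (𝒰 n)) →
    ∃ ℱ : ℕ → Set (Set X),
      (∀ n, ℱ n ⊆ 𝒰 n ∧ (ℱ n).Finite) ∧
      ∀ x : X, ∀ᶠ n in Filter.atTop, x ∈ ⋃₀ ℱ n


open Topology

namespace HurAux

variable (Xs : Set ℝ)

/-- `x` has a one-sided closed interval to the right inside `Xs`. -/
def SideR (x : ℝ) : Prop := ∃ ε > 0, Icc x (x + ε) ⊆ Xs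

/-- `x` has a one-sided closed interval to the left inside `Xs`. -/
def SideL (x : ℝ) : Prop := ∃ ε > 0, Icc (x - ε) x ⊆ Xs

/-- `x` is an interior point of `Xs`. -/
def IntP (x : ℝ) : Prop := ∃ ε > 0, Ioo (x - ε) (x + ε) ⊆ Xs

/-- The "totally disconnected part" of `Xs`. -/
def Zset : Set ↥Xs := {x | ¬ SideR Xs x.val ∧ ¬ SideL Xs x.val}

variable {Xs}

lemma notZ_of_mem_Ioo {a b : ℝ} (hsub : Ioo a b ⊆ Xs) {y : ↥Xs} (hy : y.val ∈ Ioo a b) :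
    y ∉ Zset Xs := by
  intro hZ
  apply hZ.2
  refine ⟨(y.val - a) / 2, by linarith [hy.1], fun z hz => hsub ⟨?_, ?_⟩⟩
  · have := hz.1; linarith [hy.1]
  · have := hz.2; linarith [hy.2]

lemma clopen_lt {v : ℝ} (hv : v ∉ Xs) : IsClopen {y : ↥Xs | y.val < v} := by
  constructor
  · have : {y : ↥Xs | y.val < v} = Subtype.val ⁻¹' (Iic v) := by
      ext y
      simp only [mem_setOf_eq, mem_preimage, mem_Iic]
      exact ⟨le_of_lt, fun h => lt_of_le_of_ne h (fun he => hv (he ▸ y.property))⟩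
    rw [this]
    exact isClosed_Iic.preimage continuous_subtype_val
  · exact isOpen_Iio.preimage continuous_subtype_val

lemma clopen_gt {u : ℝ} (hu : u ∉ Xs) : IsClopen {y : ↥Xs | u < y.val} := by
  constructor
  · have : {y : ↥Xs | u < y.val} = Subtype.val ⁻¹' (Ici u) := by
      ext y
      simp only [mem_setOf_eq, mem_preimage, mem_Ici]
      exact ⟨le_of_lt, fun h => lt_of_le_of_ne h (fun he => hu (he ▸ y.property))⟩
    rw [this]
    exact isClosed_Ici.preimage continuous_subtype_val
  · exact isOpen_Ioi.preimage continuous_subtype_val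

lemma exists_ball_subset {U : Set ↥Xs} (hU : IsOpen U) {z : ↥Xs} (hz : z ∈ U) :
    ∃ ε > 0, ∀ y : ↥Xs, |y.val - z.val| < ε → y ∈ U := by
  obtain ⟨ε, hε, hb⟩ := Metric.isOpen_iff.mp hU z hz
  refine ⟨ε, hε, fun y hy => hb ?_⟩
  rw [Metric.mem_ball, Subtype.dist_eq, Real.dist_eq]
  exact hy

lemma pick_mem {𝒰 : Set (Set ↥Xs)} (hc : IsOpenCover 𝒰) (z : ↥Xs) : ∃ U ∈ 𝒰, z ∈ U := by
  have hz : z ∈ ⋃₀ 𝒰 := hc.2 ▸ mem_univ z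
  exact hz

lemma right_piece {𝒰 : Set (Set ↥Xs)} (hc : IsOpenCover 𝒰) (x : ↥Xs) :
    ∃ C U : Set ↥Xs, U ∈ 𝒰 ∧ IsClopen C ∧ (∀ y : ↥Xs, y.val ≤ x.val → y ∈ C) ∧
      ∀ y ∈ C, x.val < y.val → y ∈ Zset Xs → y ∈ U := by
  set Tr : Set ℝ := {t | x.val < t ∧ t ∉ Xs} with hTrdef
  by_cases hTr : Tr.Nonempty
  · set β := sInf Tr with hβdef
    have hbdd : BddBelow Tr := ⟨x.val, fun t ht => le_of_lt ht.1⟩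
    have hβx : x.val ≤ β := le_csInf hTr (fun t ht => le_of_lt ht.1)
    have hIoo : Ioo x.val β ⊆ Xs := by
      intro z hz
      by_contra hzX
      have : z ∈ Tr := ⟨hz.1, hzX⟩
      exact absurd (csInf_le hbdd this) (not_le.mpr hz.2)
    by_cases hβX : β ∈ Xs
    · set b : ↥Xs := ⟨β, hβX⟩ with hbdef
      obtain ⟨U, hU𝒰, hbU⟩ := pick_mem hc b
      obtain ⟨ε, hε, hball⟩ := exists_ball_subset (hc.1 U hU𝒰) hbU
      obtain ⟨t, htTr, htlt⟩ := exists_lt_of_csInf_lt hTr (by linarith : sInf Tr < β + ε)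
      have hβt : β < t := lt_of_le_of_ne (csInf_le hbdd htTr) (fun he => htTr.2 (he ▸ hβX))
      refine ⟨{y : ↥Xs | y.val < t}, U, hU𝒰, clopen_lt htTr.2,
        fun y hy => lt_of_le_of_lt (hy.trans hβx) hβt, ?_⟩
      intro y hyC hxy hZ
      rcases lt_or_ge y.val β with h | h
      · exact absurd hZ (notZ_of_mem_Ioo hIoo ⟨hxy, h⟩)
      · apply hball
        rw [abs_of_nonneg (sub_nonneg.mpr h)]
        have : y.val < t := hyC
        linarith
    · have hxβ : x.val < β := lt_of_le_of_ne hβx (fun he => hβX (he ▸ x.property))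
      obtain ⟨U, hU𝒰, _⟩ := pick_mem hc x
      refine ⟨{y : ↥Xs | y.val < β}, U, hU𝒰, clopen_lt hβX,
        fun y hy => lt_of_le_of_lt hy hxβ, ?_⟩
      intro y hyC hxy hZ
      exact absurd hZ (notZ_of_mem_Ioo hIoo ⟨hxy, hyC⟩)
  · obtain ⟨U, hU𝒰, _⟩ := pick_mem hc x
    refine ⟨univ, U, hU𝒰, isClopen_univ, fun y _ => mem_univ y, ?_⟩
    intro y _ hxy hZ
    have hsub : Ioo x.val (y.val + 1) ⊆ Xs := by
      intro z hz
      by_contra hzX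
      exact hTr ⟨z, hz.1, hzX⟩
    exact absurd hZ (notZ_of_mem_Ioo hsub ⟨hxy, by linarith⟩)

lemma left_piece {𝒰 : Set (Set ↥Xs)} (hc : IsOpenCover 𝒰) (x : ↥Xs) :
    ∃ C U : Set ↥Xs, U ∈ 𝒰 ∧ IsClopen C ∧ (∀ y : ↥Xs, x.val ≤ y.val → y ∈ C) ∧
      ∀ y ∈ C, y.val < x.val → y ∈ Zset Xs → y ∈ U := by
  set Tl : Set ℝ := {t | t < x.val ∧ t ∉ Xs} with hTldef
  by_cases hTl : Tl.Nonempty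
  · set β := sSup Tl with hβdef
    have hbdd : BddAbove Tl := ⟨x.val, fun t ht => le_of_lt ht.1⟩
    have hβx : β ≤ x.val := csSup_le hTl (fun t ht => le_of_lt ht.1)
    have hIoo : Ioo β x.val ⊆ Xs := by
      intro z hz
      by_contra hzX
      have : z ∈ Tl := ⟨hz.2, hzX⟩
      exact absurd (le_csSup hbdd this) (not_le.mpr hz.1)
    by_cases hβX : β ∈ Xs
    · set b : ↥Xs := ⟨β, hβX⟩ with hbdef
      obtain ⟨U, hU𝒰, hbU⟩ := pick_mem hc b
      obtain ⟨ε, hε, hball⟩ := exists_ball_subset (hc.1 U hU𝒰) hbU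
      obtain ⟨t, htTl, htlt⟩ := exists_lt_of_lt_csSup hTl (by linarith : β - ε < sSup Tl)
      have hβt : t < β := lt_of_le_of_ne (le_csSup hbdd htTl) (fun he => htTl.2 (he ▸ hβX))
      refine ⟨{y : ↥Xs | t < y.val}, U, hU𝒰, clopen_gt htTl.2,
        fun y hy => lt_of_lt_of_le hβt (hβx.trans hy |>.trans_eq rfl), ?_⟩
      · intro y hyC hxy hZ
        rcases lt_or_ge β y.val with h | h
        · exact absurd hZ (notZ_of_mem_Ioo hIoo ⟨h, hxy⟩)
        · apply hball
          rw [abs_of_nonpos (sub_nonpos.mpr h)]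
          have : t < y.val := hyC
          linarith
    · have hxβ : β < x.val := lt_of_le_of_ne hβx (fun he => hβX (he ▸ x.property))
      obtain ⟨U, hU𝒰, _⟩ := pick_mem hc x
      refine ⟨{y : ↥Xs | β < y.val}, U, hU𝒰, clopen_gt hβX,
        fun y hy => lt_of_lt_of_le hxβ hy, ?_⟩
      intro y hyC hxy hZ
      exact absurd hZ (notZ_of_mem_Ioo hIoo ⟨hyC, hxy⟩)
  · obtain ⟨U, hU𝒰, _⟩ := pick_mem hc x
    refine ⟨univ, U, hU𝒰, isClopen_univ, fun y _ => mem_univ y, ?_⟩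
    intro y _ hxy hZ
    have hsub : Ioo (y.val - 1) x.val ⊆ Xs := by
      intro z hz
      by_contra hzX
      exact hTl ⟨z, hz.2, hzX⟩
    exact absurd hZ (notZ_of_mem_Ioo hsub ⟨by linarith, hxy⟩)

lemma exists_piece {𝒰 : Set (Set ↥Xs)} (hc : IsOpenCover 𝒰) (x : ↥Xs) :
    ∃ C : Set ↥Xs, IsClopen C ∧ x ∈ C ∧
      ∃ W : Set (Set ↥Xs), W ⊆ 𝒰 ∧ W.Finite ∧ Zset Xs ∩ C ⊆ ⋃₀ W := by
  obtain ⟨Cl, Ul, hUl𝒰, hCl, hClmem, hCldut⟩ := left_piece hc x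
  obtain ⟨Cr, Ur, hUr𝒰, hCr, hCrmem, hCrdut⟩ := right_piece hc x
  obtain ⟨Ux, hUx𝒰, hxUx⟩ := pick_mem hc x
  refine ⟨Cl ∩ Cr, hCl.inter hCr, ⟨hClmem x le_rfl, hCrmem x le_rfl⟩,
    {Ul, Ux, Ur}, ?_, ?_, ?_⟩
  · intro U hU
    rcases hU with h | h | h
    · exact h ▸ hUl𝒰
    · exact h ▸ hUx𝒰
    · exact h ▸ hUr𝒰
  · exact (Set.finite_singleton Ur).insert Ux |>.insert Ul
  · rintro y ⟨hyZ, hyCl, hyCr⟩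
    rcases lt_trichotomy y.val x.val with h | h | h
    · exact ⟨Ul, by simp, hCldut y hyCl h hyZ⟩
    · have : y = x := Subtype.ext h
      exact ⟨Ux, by simp, this ▸ hxUx⟩
    · exact ⟨Ur, by simp, hCrdut y hyCr h hyZ⟩

lemma stage (hne : Nonempty ↥Xs) {𝒰 : Set (Set ↥Xs)} (hc : IsOpenCover 𝒰) :
    ∃ (C : ℕ → Set ↥Xs) (W : ℕ → Set (Set ↥Xs)),
      (∀ k, IsClopen (C k)) ∧
      (∀ k, W k ⊆ 𝒰 ∧ (W k).Finite ∧ Zset Xs ∩ C k ⊆ ⋃₀ W k) ∧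
      (∀ x : ↥Xs, ∃ k, x ∈ C k) := by
  classical
  set 𝒮 : Set (Set ↥Xs) :=
    {C | IsClopen C ∧ ∃ W : Set (Set ↥Xs), W ⊆ 𝒰 ∧ W.Finite ∧ Zset Xs ∩ C ⊆ ⋃₀ W} with h𝒮
  obtain ⟨T, hTc, hT𝒮, hTun⟩ :=
    TopologicalSpace.isOpen_sUnion_countable 𝒮 (fun s hs => hs.1.isOpen)
  have huniv : ⋃₀ T = univ := by
    rw [hTun]
    apply eq_univ_of_forall
    intro x
    obtain ⟨C, hC1, hC2, hC3⟩ := exists_piece hc x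
    exact ⟨C, ⟨hC1, hC3⟩, hC2⟩
  have hTne : T.Nonempty := by
    rcases hne with ⟨x⟩
    have : x ∈ ⋃₀ T := huniv ▸ mem_univ x
    obtain ⟨s, hs, _⟩ := this
    exact ⟨s, hs⟩
  obtain ⟨f, hf⟩ := hTc.exists_eq_range hTne
  have hf𝒮 : ∀ k, f k ∈ 𝒮 := fun k => hT𝒮 (hf ▸ mem_range_self k)
  have hW : ∀ k, ∃ W : Set (Set ↥Xs), W ⊆ 𝒰 ∧ W.Finite ∧ Zset Xs ∩ f k ⊆ ⋃₀ W :=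
    fun k => (hf𝒮 k).2
  choose W hW1 hW2 hW3 using hW
  refine ⟨f, W, fun k => (hf𝒮 k).1, fun k => ⟨hW1 k, hW2 k, hW3 k⟩, fun x => ?_⟩
  have : x ∈ ⋃₀ T := huniv ▸ mem_univ x
  obtain ⟨s, hs, hxs⟩ := this
  rw [hf] at hs
  obtain ⟨k, rfl⟩ := hs
  exact ⟨k, hxs⟩

end HurAux

namespace HurAux

variable {Xs : Set ℝ}

lemma countable_Er : {x : ↥Xs | ¬ IntP Xs x.val ∧ SideR Xs x.val}.Countable := by
  have key : ∀ q : ℚ,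
      {x : ↥Xs | ¬ IntP Xs x.val ∧ x.val < (q : ℝ) ∧ Icc x.val (q : ℝ) ⊆ Xs}.Subsingleton := by
    intro q x1 h1 x2 h2
    by_contra hne
    have hvne : x1.val ≠ x2.val := fun h => hne (Subtype.ext h)
    have key2 : ∀ a b : ↥Xs,
        a ∈ {x : ↥Xs | ¬ IntP Xs x.val ∧ x.val < (q : ℝ) ∧ Icc x.val (q : ℝ) ⊆ Xs} →
        b ∈ {x : ↥Xs | ¬ IntP Xs x.val ∧ x.val < (q : ℝ) ∧ Icc x.val (q : ℝ) ⊆ Xs} →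
        a.val < b.val → False := by
      intro a b ha hb hab
      apply hb.1
      refine ⟨min (b.val - a.val) ((q : ℝ) - b.val), by
        simp only [lt_min_iff]
        exact ⟨by linarith, by linarith [hb.2.1]⟩, ?_⟩
      intro z hz
      apply ha.2.2
      constructor
      · have := hz.1
        have h1 := min_le_left (b.val - a.val) ((q : ℝ) - b.val)
        linarith
      · have := hz.2
        have h2 := min_le_right (b.val - a.val) ((q : ℝ) - b.val)
        linarith
    rcases lt_or_gt_of_ne hvne with h | h
    · exact key2 x1 x2 h1 h2 h
    · exact key2 x2 x1 h2 h1 h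
  apply Set.Countable.mono ?_
    (countable_iUnion (fun q : ℚ => (key q).countable))
  intro x hx
  obtain ⟨hInt, ε, hε, hsub⟩ := hx
  obtain ⟨q, hq1, hq2⟩ := exists_rat_btwn (by linarith : x.val < x.val + ε)
  refine mem_iUnion.mpr ⟨q, hInt, hq1, fun z hz => hsub ⟨hz.1, le_trans hz.2 (le_of_lt hq2)⟩⟩

lemma countable_El : {x : ↥Xs | ¬ IntP Xs x.val ∧ SideL Xs x.val}.Countable := by
  have key : ∀ q : ℚ,
      {x : ↥Xs | ¬ IntP Xs x.val ∧ (q : ℝ) < x.val ∧ Icc (q : ℝ) x.val ⊆ Xs}.Subsingleton := by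
    intro q x1 h1 x2 h2
    by_contra hne
    have hvne : x1.val ≠ x2.val := fun h => hne (Subtype.ext h)
    have key2 : ∀ a b : ↥Xs,
        a ∈ {x : ↥Xs | ¬ IntP Xs x.val ∧ (q : ℝ) < x.val ∧ Icc (q : ℝ) x.val ⊆ Xs} →
        b ∈ {x : ↥Xs | ¬ IntP Xs x.val ∧ (q : ℝ) < x.val ∧ Icc (q : ℝ) x.val ⊆ Xs} →
        a.val < b.val → False := by
      intro a b ha hb hab
      apply ha.1
      refine ⟨min (b.val - a.val) (a.val - (q : ℝ)), by
        simp only [lt_min_iff]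
        exact ⟨by linarith, by linarith [ha.2.1]⟩, ?_⟩
      intro z hz
      apply hb.2.2
      constructor
      · have := hz.1
        have h2 := min_le_right (b.val - a.val) (a.val - (q : ℝ))
        linarith
      · have := hz.2
        have h1 := min_le_left (b.val - a.val) (a.val - (q : ℝ))
        linarith
    rcases lt_or_gt_of_ne hvne with h | h
    · exact key2 x1 x2 h1 h2 h
    · exact key2 x2 x1 h2 h1 h
  apply Set.Countable.mono ?_
    (countable_iUnion (fun q : ℚ => (key q).countable))
  intro x hx
  obtain ⟨hInt, ε, hε, hsub⟩ := hx
  obtain ⟨q, hq1, hq2⟩ := exists_rat_btwn (by linarith : x.val - ε < x.val)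
  refine mem_iUnion.mpr ⟨q, hInt, hq2, fun z hz => hsub ⟨le_trans (le_of_lt hq1) hz.1, hz.2⟩⟩

/-- Compact exhaustion of the interior part. -/
def Kc (Xs : Set ℝ) (j : ℕ) : Set ℝ :=
  {t | ∀ y : ℝ, |y - t| < 1 / (j + 1) → y ∈ Xs} ∩ Icc (-(j : ℝ)) (j : ℝ)

lemma Kc_compact (j : ℕ) : IsCompact (Kc Xs j) := by
  apply IsCompact.of_isClosed_subset isCompact_Icc ?_ inter_subset_right
  apply IsClosed.inter ?_ isClosed_Icc
  rw [← isOpen_compl_iff]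
  rw [Metric.isOpen_iff]
  intro t ht
  simp only [mem_compl_iff, mem_setOf_eq, not_forall] at ht
  obtain ⟨y, hy1, hy2⟩ := ht
  refine ⟨1 / (j + 1) - |y - t|, by linarith, fun t' ht' => ?_⟩
  simp only [mem_compl_iff, mem_setOf_eq, not_forall]
  refine ⟨y, ?_, hy2⟩
  rw [Metric.mem_ball, Real.dist_eq] at ht'
  calc |y - t'| ≤ |y - t| + |t - t'| := by
        have := abs_sub_le y t t'
        linarith [abs_sub_le y t t']
    _ < 1 / (j + 1) := by
        rw [abs_sub_comm t t']
        linarith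

lemma Kc_subset (j : ℕ) : Kc Xs j ⊆ Xs := by
  intro t ht
  apply ht.1 t
  simp only [sub_self, abs_zero]
  positivity

lemma Kc_mem_eventually {x : ↥Xs} (h : IntP Xs x.val) :
    ∃ J : ℕ, ∀ j ≥ J, x.val ∈ Kc Xs j := by
  obtain ⟨ε, hε, hsub⟩ := h
  obtain ⟨N1, hN1⟩ := exists_nat_ge (1 / ε)
  obtain ⟨N2, hN2⟩ := exists_nat_ge |x.val|
  refine ⟨max N1 N2, fun j hj => ?_⟩
  have hj1 : (N1 : ℝ) ≤ j := by exact_mod_cast le_trans (le_max_left _ _) hj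
  have hj2 : (N2 : ℝ) ≤ j := by exact_mod_cast le_trans (le_max_right _ _) hj
  constructor
  · intro y hy
    apply hsub
    have hlt : 1 / ((j : ℝ) + 1) ≤ ε := by
      rw [div_le_iff₀ (by positivity)]
      rw [div_le_iff₀ hε] at hN1
      nlinarith

    have : |y - x.val| < ε := lt_of_lt_of_le hy hlt
    rw [abs_lt] at this
    exact ⟨by linarith, by linarith⟩
  · have := abs_le.mp (le_trans hN2 hj2)
    exact ⟨this.1, this.2⟩

end HurAux

namespace HurAux

variable {Xs : Set ℝ}

lemma K'_compact (n : ℕ) : IsCompact (Subtype.val ⁻¹' Kc Xs n : Set ↥Xs) := by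
  apply IsInducing.subtypeVal.isCompact_iff.mpr
  have h : Subtype.val '' (Subtype.val ⁻¹' Kc Xs n : Set ↥Xs) = Kc Xs n := by
    rw [image_preimage_eq_inter_range, Subtype.range_val]
    exact inter_eq_self_of_subset_left (Kc_subset n)
  rw [h]
  exact Kc_compact n

lemma exists_finsub {𝒰 : Set (Set ↥Xs)} (hc : IsOpenCover 𝒰) (n : ℕ) :
    ∃ 𝒢 : Set (Set ↥Xs), 𝒢 ⊆ 𝒰 ∧ 𝒢.Finite ∧
      (Subtype.val ⁻¹' Kc Xs n : Set ↥Xs) ⊆ ⋃₀ 𝒢 := by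
  have hcv : (Subtype.val ⁻¹' Kc Xs n : Set ↥Xs) ⊆ ⋃ U : ↥𝒰, (U : Set ↥Xs) := by
    intro x _
    have hx : x ∈ ⋃₀ 𝒰 := hc.2 ▸ mem_univ x
    obtain ⟨U, hU, hxU⟩ := hx
    exact mem_iUnion.mpr ⟨⟨U, hU⟩, hxU⟩
  obtain ⟨t, ht⟩ := (K'_compact n).elim_finite_subcover (fun U : ↥𝒰 => (U : Set ↥Xs))
    (fun U => hc.1 U U.2) hcv
  refine ⟨Subtype.val '' (t : Set ↥𝒰), ?_, t.finite_toSet.image _, ?_⟩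
  · rintro U ⟨V, _, rfl⟩
    exact V.2
  · intro x hx
    obtain ⟨U, hUt, hxU⟩ := mem_iUnion₂.mp (ht hx)
    exact ⟨U.val, ⟨U, hUt, rfl⟩, hxU⟩

theorem hurewicz_backward (Xs : Set ℝ)
    (H : ∀ Ψ : ↥Xs → ℕ → ℕ, Continuous Ψ → BddFam (Set.range Ψ)) : UfinOGamma ↥Xs := by
  classical
  intro 𝒰 hcov _
  by_cases hne : Nonempty ↥Xs
  swap
  · exact ⟨fun _ => ∅, fun n => ⟨empty_subset _, finite_empty⟩, fun x => (hne ⟨x⟩).elim⟩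
  have hstage := fun n => stage hne (hcov n)
  choose C W hCclopen hWprop hCcov using hstage
  have hmem : ∀ n x, ∃ k, x ∈ C n k := fun n x => hCcov n x
  set F : ℕ → ↥Xs → ℕ := fun n x => Nat.find (hmem n x) with hFdef
  have hFloc : ∀ n, IsLocallyConstant (F n) := by
    intro n
    rw [IsLocallyConstant.iff_exists_open]
    intro x
    refine ⟨C n (F n x) ∩ ⋂ i ∈ Finset.range (F n x), (C n i)ᶜ, ?_, ⟨?_, ?_⟩, ?_⟩
    · exact ((hCclopen n (F n x)).isOpen).inter
        (isOpen_biInter_finset (fun i _ => (hCclopen n i).compl.isOpen))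
    · exact Nat.find_spec (hmem n x)
    · simp only [mem_iInter, Finset.mem_range, mem_compl_iff]
      intro i hi
      exact Nat.find_min (hmem n x) hi
    · intro y hy
      simp only [mem_inter_iff, mem_iInter, Finset.mem_range, mem_compl_iff] at hy
      exact (Nat.find_eq_iff (hmem n y)).mpr ⟨hy.1, fun i hi => hy.2 i hi⟩
  have hΨcont : Continuous (fun x (n : ℕ) => F n x) :=
    continuous_pi (fun n => (hFloc n).continuous)
  obtain ⟨g, hg⟩ := H _ hΨcont
  have hgx : ∀ x : ↥Xs, ∀ᶠ n in atTop, F n x ≤ g n := fun x => hg _ ⟨x, rfl⟩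
  set E : Set ↥Xs := {x : ↥Xs | ¬ IntP Xs x.val ∧ SideR Xs x.val} ∪
    {x : ↥Xs | ¬ IntP Xs x.val ∧ SideL Xs x.val} with hEdef
  have hEc : (insert hne.some E).Countable := (countable_Er.union countable_El).insert _
  obtain ⟨e, he⟩ := hEc.exists_eq_range (insert_nonempty _ _)
  have hpick : ∀ n (z : ↥Xs), ∃ U ∈ 𝒰 n, z ∈ U := fun n z => pick_mem (hcov n) z
  choose pU hpU1 hpU2 using hpick
  have hfins := fun n => exists_finsub (hcov n) n
  choose 𝒢 h𝒢1 h𝒢2 h𝒢3 using hfins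
  set ℱ : ℕ → Set (Set ↥Xs) := fun n =>
    (⋃ k ∈ Finset.range (g n + 1), W n k) ∪ 𝒢 n ∪ (fun j => pU n (e j)) '' (Iic n) with hℱdef
  refine ⟨ℱ, fun n => ⟨?_, ?_⟩, ?_⟩
  · rintro U hU
    rcases hU with (hU | hU) | hU
    · obtain ⟨k, _, hk⟩ := mem_iUnion₂.mp hU
      exact (hWprop n k).1 hk
    · exact h𝒢1 n hU
    · obtain ⟨j, _, rfl⟩ := hU
      exact hpU1 n (e j)
  · refine (Set.Finite.union (Set.Finite.union ?_ (h𝒢2 n)) ((finite_Iic n).image _))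
    exact (Finset.range (g n + 1)).finite_toSet.biUnion (fun k _ => (hWprop n k).2.1)
  · intro x
    by_cases hInt : IntP Xs x.val
    · obtain ⟨J, hJ⟩ := Kc_mem_eventually hInt
      rw [eventually_atTop]
      refine ⟨J, fun n hn => ?_⟩
      obtain ⟨U, hU, hxU⟩ := h𝒢3 n (hJ n hn)
      exact ⟨U, Or.inl (Or.inr hU), hxU⟩
    · by_cases hSide : SideR Xs x.val ∨ SideL Xs x.val
      · have hxE : x ∈ insert hne.some E := by
          rcases hSide with h | h
          · exact mem_insert_iff.mpr (Or.inr (mem_union_left _ ⟨hInt, h⟩))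
          · exact mem_insert_iff.mpr (Or.inr (mem_union_right _ ⟨hInt, h⟩))
        rw [he] at hxE
        obtain ⟨j, hj⟩ := hxE
        rw [eventually_atTop]
        refine ⟨j, fun n hn => ?_⟩
        refine ⟨pU n (e j), Or.inr ⟨j, mem_Iic.mpr hn, rfl⟩, ?_⟩
        rw [← hj]
        exact hpU2 n (e j)
      · push_neg at hSide
        have hxZ : x ∈ Zset Xs := ⟨hSide.1, hSide.2⟩
        refine (hgx x).mono fun n hn => ?_
        obtain ⟨U, hUW, hxU⟩ := (hWprop n (F n x)).2.2 ⟨hxZ, Nat.find_spec (hmem n x)⟩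
        refine ⟨U, Or.inl (Or.inl ?_), hxU⟩
        exact mem_iUnion₂.mpr ⟨F n x, Finset.mem_range.mpr (Nat.lt_succ_of_le hn), hUW⟩

end HurAux

namespace HurAux

theorem hurewicz_forward (Xs : Set ℝ) (h : UfinOGamma Xs) (Ψ : Xs → ℕ → ℕ)
    (hΨ : Continuous Ψ) : BddFam (Set.range Ψ) := by
  classical
  set V : ℕ → ℕ → Set Xs := fun n k => {x | Ψ x n ≤ k} with hVdef
  have hVopen : ∀ n k, IsOpen (V n k) := by
    intro n k
    have hc : Continuous fun x : Xs => Ψ x n := (continuous_apply n).comp hΨ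
    exact hc.isOpen_preimage (Set.Iic k) (isOpen_discrete _)
  have hVcover : ∀ n, IsOpenCover (Set.range (V n)) := by
    intro n
    constructor
    · rintro U ⟨k, rfl⟩; exact hVopen n k
    · ext x
      simp only [Set.mem_univ, iff_true, Set.mem_sUnion]
      exact ⟨V n (Ψ x n), ⟨Ψ x n, rfl⟩, show Ψ x n ≤ Ψ x n from le_rfl⟩
  -- canonical index function
  set φ : ℕ → Set Xs → ℕ := fun n s => if h : ∃ k, V n k = s then h.choose else 0 with hφdef
  have hφ : ∀ n s, s ∈ Set.range (V n) → V n (φ n s) = s := by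
    intro n s hs
    obtain ⟨k, hk⟩ := hs
    simp only [hφdef]
    rw [dif_pos ⟨k, hk⟩]
    exact (Exists.choose_spec (⟨k, hk⟩ : ∃ k, V n k = s))
  have hnofin : ∀ n, ¬ (∃ k, ∀ x, Ψ x n ≤ k) → ¬ HasFinSubcover (Set.range (V n)) := by
    intro n hn ⟨ℱ, hsub, hfin, hcov⟩
    apply hn
    obtain ⟨b, hb⟩ := (hfin.image (φ n)).bddAbove
    refine ⟨b, fun x => ?_⟩
    have hx : (x : Xs) ∈ ⋃₀ ℱ := hcov ▸ Set.mem_univ x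
    obtain ⟨s, hsℱ, hxs⟩ := hx
    have h1 : V n (φ n s) = s := hφ n s (hsub hsℱ)
    have h2 : Ψ x n ≤ φ n s := by rw [← h1] at hxs; exact hxs
    exact h2.trans (hb (Set.mem_image_of_mem _ hsℱ))
  by_cases hcap : ∀ n, ∃ k, ∀ x, Ψ x n ≤ k
  · choose g hg using hcap
    exact ⟨g, by rintro f ⟨x, rfl⟩; exact Filter.Eventually.of_forall fun n => hg n x⟩
  · obtain ⟨n₀, hn₀⟩ := not_forall.mp hcap
    set 𝒰 : ℕ → Set (Set Xs) := fun n =>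
      if (∃ k, ∀ x, Ψ x n ≤ k) then Set.range (V n₀) else Set.range (V n) with h𝒰def
    have h𝒰open : ∀ n, IsOpenCover (𝒰 n) := by
      intro n; by_cases hc : ∃ k, ∀ x, Ψ x n ≤ k
      · simp only [h𝒰def, if_pos hc]; exact hVcover n₀
      · simp only [h𝒰def, if_neg hc]; exact hVcover n
    have h𝒰nofin : ∀ n, ¬ HasFinSubcover (𝒰 n) := by
      intro n; by_cases hc : ∃ k, ∀ x, Ψ x n ≤ k
      · simp only [h𝒰def, if_pos hc]; exact hnofin n₀ hn₀
      · simp only [h𝒰def, if_neg hc]; exact hnofin n hc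
    obtain ⟨ℱ, hℱ, hcov⟩ := h 𝒰 h𝒰open h𝒰nofin
    set g : ℕ → ℕ := fun n =>
      if hc : ∃ k, ∀ x, Ψ x n ≤ k then hc.choose
      else (((hℱ n).2.image (φ n)).bddAbove).choose with hgdef
    refine ⟨g, ?_⟩
    rintro f ⟨x, rfl⟩
    refine (hcov x).mono fun n hn => ?_
    by_cases hc : ∃ k, ∀ x, Ψ x n ≤ k
    · simp only [hgdef]; rw [dif_pos hc]; exact hc.choose_spec x
    · obtain ⟨s, hsℱ, hxs⟩ := hn
      have hsub : ℱ n ⊆ Set.range (V n) := by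
        have h0 := (hℱ n).1
        simp only [h𝒰def] at h0
        rwa [if_neg hc] at h0
      have h1 : V n (φ n s) = s := hφ n s (hsub hsℱ)
      have h2 : Ψ x n ≤ φ n s := by rw [← h1] at hxs; exact hxs
      have h3 : φ n s ≤ g n := by
        simp only [hgdef]; rw [dif_neg hc]
        exact (((hℱ n).2.image (φ n)).bddAbove).choose_spec (Set.mem_image_of_mem _ hsℱ)
      exact h2.trans h3

end HurAux


/-- Hurewicz' theorem: a set of reals satisfies `Ufin(O,Γ)` iff all of its continuous
images in the Baire space are bounded. -/
theorem hurewicz_characterization (X : Set ℝ) :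
    UfinOGamma X ↔ ∀ Ψ : X → (ℕ → ℕ), Continuous Ψ → BddFam (Set.range Ψ) :=
  ⟨fun h Ψ hΨ => HurAux.hurewicz_forward X h Ψ hΨ, fun H => HurAux.hurewicz_backward X H⟩
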